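/- arXiv:2503.17883 — 2 statements merged into one kernel-verified Lean document; each statement's English description precedes it below -/
import Mathlib

section
/- Let e ≥ 4 be an integer with t_e ≥ 1, let n ≥ b_e = k_e+2, write k = k_e and t = t_e, and let γ = ρ(D_{n,e}). Suppose y is an eigenvector of the adjacency matrix of D_{n,e} with eigenvalue γ all of whose entries are positive. Then y_2 = y_3 = ... = y_{t+1}, y_{t+2} = y_{t+3} = ... = y_{k+1}, y_{k+3} = y_{k+4} = ... = y_n, and: (γ+1)y_1 = y_1 + t·y_2 + (k-t)·y_{k+1} + y_{k+2} + (n-k-2)·y_n; (γ+1)y_2 = y_1 + t·y_2 + (k-t)·y_{k+1} + y_{k+2}; (γ+1)y_{k+1} = y_1 + t·y_2 + (k-t)·y_{k+1}; γ·y_{k+2} = y_1 + t·y_2; and, provided n > k+2, γ·y_n = y_1. Moreover, γ is the largest real root of the polynomial λ(λ+1)(λ³ - λ²(k-1) - λ(k+t+1) + (t+1)(k-t-1)) - (n-k-2)(λ³ - λ²(k-2) - λ(k+t-1) + t(k-t-1)). -/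
open Polynomial Matrix

attribute [local instance] Classical.propDecidable

/-- The spectral radius of a finite simple graph: the largest modulus of a (real)
eigenvalue of its adjacency matrix. -/
noncomputable def specRad {V : Type} [Fintype V] (G : SimpleGraph V) : ℝ :=
  sSup { r : ℝ | ∃ μ : ℝ, (∃ v : V → ℝ, v ≠ 0 ∧ (G.adjMatrix ℝ) *ᵥ v = μ • v) ∧ r = |μ| }

/-- The characteristic polynomial of the adjacency matrix of a graph. -/
noncomputable def gCharPoly {V : Type} [Fintype V] (G : SimpleGraph V) : Polynomial ℝ :=
  Matrix.charpoly (G.adjMatrix ℝ)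

/-- `G` is a connected graph with `n` vertices and `n - 1 + e` edges. -/
def memC (n e : ℕ) (G : SimpleGraph (Fin n)) : Prop :=
  G.Connected ∧ G.edgeSet.ncard = n - 1 + e

/-- `kk e` is the largest natural number `k` with `k * (k - 1) / 2 ≤ e`. -/
def kk (e : ℕ) : ℕ := Nat.findGreatest (fun k => k * (k - 1) ≤ 2 * e) (e + 2)

def tt (e : ℕ) : ℕ := e - kk e * (kk e - 1) / 2

def bb (e : ℕ) : ℕ := if e = 0 then 1 else if tt e = 0 then kk e + 1 else kk e + 2

/-- The graph `V_{n,e} = (K_{1,e} + (n-e-2)K_1) ∨ K_1` (vertices `0`-based: paper vertex `i`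
is `i - 1` here): vertex `0` is adjacent to all other vertices, vertex `1` is additionally
adjacent to vertices `2, …, e+1`, and there are no other edges. -/
def graphV (n e : ℕ) : SimpleGraph (Fin n) :=
  SimpleGraph.fromRel (fun i j => (i : ℕ) = 0 ∨ ((i : ℕ) = 1 ∧ 2 ≤ (j : ℕ) ∧ (j : ℕ) ≤ e + 1))

/-- The graph `D_{n,e}` (vertices `0`-based): vertex `0` is adjacent to all other vertices,
and for `1 ≤ i < j`, vertices `i` and `j` are adjacent iff `j ≤ kk e` or
(`j = kk e + 1` and `i ≤ tt e`).  For `n < kk e + 2` this is the complete graph. -/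
def graphD (n e : ℕ) : SimpleGraph (Fin n) :=
  SimpleGraph.fromRel (fun i j =>
    (i : ℕ) = 0 ∨ (1 ≤ (i : ℕ) ∧ (i : ℕ) < (j : ℕ) ∧
      ((j : ℕ) ≤ kk e ∨ ((j : ℕ) = kk e + 1 ∧ (i : ℕ) ≤ tt e))))

/-- A graph on `Fin n` whose adjacency matrix is stepwise (i.e. a threshold graph whose
vertices are already arranged in the canonical order). -/
def IsStepwise {n : ℕ} (G : SimpleGraph (Fin n)) : Prop :=
  ∀ i j k l : Fin n, G.Adj i j → i < j → k < l → k ≤ i → l ≤ j → G.Adj k l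

/-- The (0-based) index of the last vertex of degree at least 2, i.e. the paper's `s - 1`. -/
noncomputable def sIdx {n : ℕ} (G : SimpleGraph (Fin n)) : ℕ :=
  Nat.findGreatest (fun i => ∃ h : i < n, 2 ≤ (G.neighborSet ⟨i, h⟩).ncard) (n - 1)

/-- The T-subgraph `T(G)`: the subgraph of `G` induced on vertices `1, …, sIdx G`
(paper vertices `2, …, s`). -/
noncomputable def Tgraph {n : ℕ} (G : SimpleGraph (Fin n)) : SimpleGraph (Fin (sIdx G)) :=
  SimpleGraph.comap (fun i => (⟨(i : ℕ) + 1, by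
    have h1 : (i : ℕ) < sIdx G := i.isLt
    have h2 : sIdx G ≤ n - 1 := by unfold sIdx; exact Nat.findGreatest_le _
    omega⟩ : Fin n)) G

/-- The graph `T1(G) = T(G) ∨ K_1`: the subgraph of `G` induced on vertices
`0, 1, …, sIdx G` (paper vertices `1, …, s`). -/
noncomputable def T1graph {n : ℕ} (G : SimpleGraph (Fin n)) : SimpleGraph (Fin (sIdx G + 1)) :=
  if h : 0 < n then
    SimpleGraph.comap (fun i => (⟨(i : ℕ) % n, Nat.mod_lt _ h⟩ : Fin n)) G
  else ⊥

/-- The rational function `R_G(λ) = λ · P_{T1(G)}(λ) / P_{T(G)}(λ)`. -/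
noncomputable def Rfun {n : ℕ} (G : SimpleGraph (Fin n)) : ℝ → ℝ :=
  fun x => x * (gCharPoly (T1graph G)).eval x / (gCharPoly (Tgraph G)).eval x

/-- The polynomial `Q_{G1,G2}`. -/
noncomputable def Qpoly {n : ℕ} (G1 G2 : SimpleGraph (Fin n)) : Polynomial ℝ :=
  X * (gCharPoly (T1graph G1) * gCharPoly (Tgraph G2)
       - gCharPoly (T1graph G2) * gCharPoly (Tgraph G1))
  + C ((sIdx G1 : ℝ) - (sIdx G2 : ℝ)) * (gCharPoly (Tgraph G1) * gCharPoly (Tgraph G2))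

/-- `r` is the largest real root of the polynomial `P`. -/
def IsGreatestRoot (P : Polynomial ℝ) (r : ℝ) : Prop :=
  P.eval r = 0 ∧ ∀ x : ℝ, P.eval x = 0 → x ≤ r

/-- `r` is the largest real zero of the function `f`. -/
def IsGreatestZero (f : ℝ → ℝ) (r : ℝ) : Prop :=
  f r = 0 ∧ ∀ x : ℝ, f x = 0 → x ≤ r

/-- Disjoint union of two simple graphs. -/
def gSum {α β : Type} (G : SimpleGraph α) (H : SimpleGraph β) : SimpleGraph (α ⊕ β) where
  Adj x y := (∃ a b, x = Sum.inl a ∧ y = Sum.inl b ∧ G.Adj a b) ∨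
             (∃ a b, x = Sum.inr a ∧ y = Sum.inr b ∧ H.Adj a b)
  symm := by
    constructor
    rintro x y (⟨a, b, rfl, rfl, hab⟩ | ⟨a, b, rfl, rfl, hab⟩)
    · exact Or.inl ⟨b, a, rfl, rfl, hab.symm⟩
    · exact Or.inr ⟨b, a, rfl, rfl, hab.symm⟩
  loopless := by
    constructor
    rintro x (⟨a, b, rfl, hx, hab⟩ | ⟨a, b, rfl, hx, hab⟩)
    · obtain rfl := Sum.inl.inj hx; exact G.loopless.irrefl a hab
    · obtain rfl := Sum.inr.inj hx; exact H.loopless.irrefl a hab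

/-- Join of two simple graphs: all cross edges are present. -/
def gJoin {α β : Type} (G : SimpleGraph α) (H : SimpleGraph β) : SimpleGraph (α ⊕ β) :=
  (gSum Gᶜ Hᶜ)ᶜ

/-- The polynomial `Ψ_e`. -/
noncomputable def PsiPoly (e : ℕ) : Polynomial ℝ :=
  let k : ℝ := kk e
  let t : ℝ := tt e
  C ((k - 1) * (k - 2) * (k ^ 2 - 3 * k + 4 * t)) * X ^ 3
  - C (k ^ 5 - 6 * k ^ 4 + k ^ 3 * (4 * t + 15) - k ^ 2 * (20 * t + 18)
        + k * (8 * t ^ 2 + 24 * t + 8) - (4 * t ^ 2 + 12 * t)) * X ^ 2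
  - C ((k ^ 2 - k + 2 * t) * (k ^ 3 + k ^ 2 * (t - 4) - k * (3 * t - 5)
        + (4 * t ^ 2 - 2 * t - 2))) * X
  + C (t * (k - t - 1) * (k ^ 2 - 3 * k + 2 * t) * (k ^ 2 - k + 2 * t))

set_option maxHeartbeats 4000000

theorem det_fin_4X {R : Type*} [CommRing R] (A : Matrix (Fin 4) (Fin 4) R) :
    det A =
      A 0 0 * A 1 1 * A 2 2 * A 3 3
      - A 0 0 * A 1 1 * A 2 3 * A 3 2
      - A 0 0 * A 1 2 * A 2 1 * A 3 3
      + A 0 0 * A 1 2 * A 2 3 * A 3 1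
      + A 0 0 * A 1 3 * A 2 1 * A 3 2
      - A 0 0 * A 1 3 * A 2 2 * A 3 1
      - A 0 1 * A 1 0 * A 2 2 * A 3 3
      + A 0 1 * A 1 0 * A 2 3 * A 3 2
      + A 0 1 * A 1 2 * A 2 0 * A 3 3
      - A 0 1 * A 1 2 * A 2 3 * A 3 0
      - A 0 1 * A 1 3 * A 2 0 * A 3 2
      + A 0 1 * A 1 3 * A 2 2 * A 3 0
      + A 0 2 * A 1 0 * A 2 1 * A 3 3
      - A 0 2 * A 1 0 * A 2 3 * A 3 1
      - A 0 2 * A 1 1 * A 2 0 * A 3 3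
      + A 0 2 * A 1 1 * A 2 3 * A 3 0
      + A 0 2 * A 1 3 * A 2 0 * A 3 1
      - A 0 2 * A 1 3 * A 2 1 * A 3 0
      - A 0 3 * A 1 0 * A 2 1 * A 3 2
      + A 0 3 * A 1 0 * A 2 2 * A 3 1
      + A 0 3 * A 1 1 * A 2 0 * A 3 2
      - A 0 3 * A 1 1 * A 2 2 * A 3 0
      - A 0 3 * A 1 2 * A 2 0 * A 3 1
      + A 0 3 * A 1 2 * A 2 1 * A 3 0 := by
  rw [Matrix.det_succ_row_zero, Fin.sum_univ_four]
  simp only [Matrix.det_fin_three, Matrix.submatrix_apply,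
    show ((0:Fin 4):ℕ) = 0 from rfl, show ((1:Fin 4):ℕ) = 1 from rfl,
    show ((2:Fin 4):ℕ) = 2 from rfl, show ((3:Fin 4):ℕ) = 3 from rfl,
    show (Fin.succ (0:Fin 3)) = 1 by decide, show (Fin.succ (1:Fin 3)) = 2 by decide,
    show (Fin.succ (2:Fin 3)) = 3 by decide,
    show (Fin.succAbove (0:Fin 4) (0:Fin 3)) = 1 by decide,
    show (Fin.succAbove (0:Fin 4) (1:Fin 3)) = 2 by decide,
    show (Fin.succAbove (0:Fin 4) (2:Fin 3)) = 3 by decide,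
    show (Fin.succAbove (1:Fin 4) (0:Fin 3)) = 0 by decide,
    show (Fin.succAbove (1:Fin 4) (1:Fin 3)) = 2 by decide,
    show (Fin.succAbove (1:Fin 4) (2:Fin 3)) = 3 by decide,
    show (Fin.succAbove (2:Fin 4) (0:Fin 3)) = 0 by decide,
    show (Fin.succAbove (2:Fin 4) (1:Fin 3)) = 1 by decide,
    show (Fin.succAbove (2:Fin 4) (2:Fin 3)) = 3 by decide,
    show (Fin.succAbove (3:Fin 4) (0:Fin 3)) = 0 by decide,
    show (Fin.succAbove (3:Fin 4) (1:Fin 3)) = 1 by decide,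
    show (Fin.succAbove (3:Fin 4) (2:Fin 3)) = 2 by decide]
  ring

theorem det_fin_5X {R : Type*} [CommRing R] (A : Matrix (Fin 5) (Fin 5) R) :
    det A =
      A 0 0 * A 1 1 * A 2 2 * A 3 3 * A 4 4
      - A 0 0 * A 1 1 * A 2 2 * A 3 4 * A 4 3
      - A 0 0 * A 1 1 * A 2 3 * A 3 2 * A 4 4
      + A 0 0 * A 1 1 * A 2 3 * A 3 4 * A 4 2
      + A 0 0 * A 1 1 * A 2 4 * A 3 2 * A 4 3
      - A 0 0 * A 1 1 * A 2 4 * A 3 3 * A 4 2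
      - A 0 0 * A 1 2 * A 2 1 * A 3 3 * A 4 4
      + A 0 0 * A 1 2 * A 2 1 * A 3 4 * A 4 3
      + A 0 0 * A 1 2 * A 2 3 * A 3 1 * A 4 4
      - A 0 0 * A 1 2 * A 2 3 * A 3 4 * A 4 1
      - A 0 0 * A 1 2 * A 2 4 * A 3 1 * A 4 3
      + A 0 0 * A 1 2 * A 2 4 * A 3 3 * A 4 1
      + A 0 0 * A 1 3 * A 2 1 * A 3 2 * A 4 4
      - A 0 0 * A 1 3 * A 2 1 * A 3 4 * A 4 2
      - A 0 0 * A 1 3 * A 2 2 * A 3 1 * A 4 4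
      + A 0 0 * A 1 3 * A 2 2 * A 3 4 * A 4 1
      + A 0 0 * A 1 3 * A 2 4 * A 3 1 * A 4 2
      - A 0 0 * A 1 3 * A 2 4 * A 3 2 * A 4 1
      - A 0 0 * A 1 4 * A 2 1 * A 3 2 * A 4 3
      + A 0 0 * A 1 4 * A 2 1 * A 3 3 * A 4 2
      + A 0 0 * A 1 4 * A 2 2 * A 3 1 * A 4 3
      - A 0 0 * A 1 4 * A 2 2 * A 3 3 * A 4 1
      - A 0 0 * A 1 4 * A 2 3 * A 3 1 * A 4 2
      + A 0 0 * A 1 4 * A 2 3 * A 3 2 * A 4 1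
      - A 0 1 * A 1 0 * A 2 2 * A 3 3 * A 4 4
      + A 0 1 * A 1 0 * A 2 2 * A 3 4 * A 4 3
      + A 0 1 * A 1 0 * A 2 3 * A 3 2 * A 4 4
      - A 0 1 * A 1 0 * A 2 3 * A 3 4 * A 4 2
      - A 0 1 * A 1 0 * A 2 4 * A 3 2 * A 4 3
      + A 0 1 * A 1 0 * A 2 4 * A 3 3 * A 4 2
      + A 0 1 * A 1 2 * A 2 0 * A 3 3 * A 4 4
      - A 0 1 * A 1 2 * A 2 0 * A 3 4 * A 4 3
      - A 0 1 * A 1 2 * A 2 3 * A 3 0 * A 4 4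
      + A 0 1 * A 1 2 * A 2 3 * A 3 4 * A 4 0
      + A 0 1 * A 1 2 * A 2 4 * A 3 0 * A 4 3
      - A 0 1 * A 1 2 * A 2 4 * A 3 3 * A 4 0
      - A 0 1 * A 1 3 * A 2 0 * A 3 2 * A 4 4
      + A 0 1 * A 1 3 * A 2 0 * A 3 4 * A 4 2
      + A 0 1 * A 1 3 * A 2 2 * A 3 0 * A 4 4
      - A 0 1 * A 1 3 * A 2 2 * A 3 4 * A 4 0
      - A 0 1 * A 1 3 * A 2 4 * A 3 0 * A 4 2
      + A 0 1 * A 1 3 * A 2 4 * A 3 2 * A 4 0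
      + A 0 1 * A 1 4 * A 2 0 * A 3 2 * A 4 3
      - A 0 1 * A 1 4 * A 2 0 * A 3 3 * A 4 2
      - A 0 1 * A 1 4 * A 2 2 * A 3 0 * A 4 3
      + A 0 1 * A 1 4 * A 2 2 * A 3 3 * A 4 0
      + A 0 1 * A 1 4 * A 2 3 * A 3 0 * A 4 2
      - A 0 1 * A 1 4 * A 2 3 * A 3 2 * A 4 0
      + A 0 2 * A 1 0 * A 2 1 * A 3 3 * A 4 4
      - A 0 2 * A 1 0 * A 2 1 * A 3 4 * A 4 3
      - A 0 2 * A 1 0 * A 2 3 * A 3 1 * A 4 4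
      + A 0 2 * A 1 0 * A 2 3 * A 3 4 * A 4 1
      + A 0 2 * A 1 0 * A 2 4 * A 3 1 * A 4 3
      - A 0 2 * A 1 0 * A 2 4 * A 3 3 * A 4 1
      - A 0 2 * A 1 1 * A 2 0 * A 3 3 * A 4 4
      + A 0 2 * A 1 1 * A 2 0 * A 3 4 * A 4 3
      + A 0 2 * A 1 1 * A 2 3 * A 3 0 * A 4 4
      - A 0 2 * A 1 1 * A 2 3 * A 3 4 * A 4 0
      - A 0 2 * A 1 1 * A 2 4 * A 3 0 * A 4 3
      + A 0 2 * A 1 1 * A 2 4 * A 3 3 * A 4 0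
      + A 0 2 * A 1 3 * A 2 0 * A 3 1 * A 4 4
      - A 0 2 * A 1 3 * A 2 0 * A 3 4 * A 4 1
      - A 0 2 * A 1 3 * A 2 1 * A 3 0 * A 4 4
      + A 0 2 * A 1 3 * A 2 1 * A 3 4 * A 4 0
      + A 0 2 * A 1 3 * A 2 4 * A 3 0 * A 4 1
      - A 0 2 * A 1 3 * A 2 4 * A 3 1 * A 4 0
      - A 0 2 * A 1 4 * A 2 0 * A 3 1 * A 4 3
      + A 0 2 * A 1 4 * A 2 0 * A 3 3 * A 4 1
      + A 0 2 * A 1 4 * A 2 1 * A 3 0 * A 4 3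
      - A 0 2 * A 1 4 * A 2 1 * A 3 3 * A 4 0
      - A 0 2 * A 1 4 * A 2 3 * A 3 0 * A 4 1
      + A 0 2 * A 1 4 * A 2 3 * A 3 1 * A 4 0
      - A 0 3 * A 1 0 * A 2 1 * A 3 2 * A 4 4
      + A 0 3 * A 1 0 * A 2 1 * A 3 4 * A 4 2
      + A 0 3 * A 1 0 * A 2 2 * A 3 1 * A 4 4
      - A 0 3 * A 1 0 * A 2 2 * A 3 4 * A 4 1
      - A 0 3 * A 1 0 * A 2 4 * A 3 1 * A 4 2
      + A 0 3 * A 1 0 * A 2 4 * A 3 2 * A 4 1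
      + A 0 3 * A 1 1 * A 2 0 * A 3 2 * A 4 4
      - A 0 3 * A 1 1 * A 2 0 * A 3 4 * A 4 2
      - A 0 3 * A 1 1 * A 2 2 * A 3 0 * A 4 4
      + A 0 3 * A 1 1 * A 2 2 * A 3 4 * A 4 0
      + A 0 3 * A 1 1 * A 2 4 * A 3 0 * A 4 2
      - A 0 3 * A 1 1 * A 2 4 * A 3 2 * A 4 0
      - A 0 3 * A 1 2 * A 2 0 * A 3 1 * A 4 4
      + A 0 3 * A 1 2 * A 2 0 * A 3 4 * A 4 1
      + A 0 3 * A 1 2 * A 2 1 * A 3 0 * A 4 4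
      - A 0 3 * A 1 2 * A 2 1 * A 3 4 * A 4 0
      - A 0 3 * A 1 2 * A 2 4 * A 3 0 * A 4 1
      + A 0 3 * A 1 2 * A 2 4 * A 3 1 * A 4 0
      + A 0 3 * A 1 4 * A 2 0 * A 3 1 * A 4 2
      - A 0 3 * A 1 4 * A 2 0 * A 3 2 * A 4 1
      - A 0 3 * A 1 4 * A 2 1 * A 3 0 * A 4 2
      + A 0 3 * A 1 4 * A 2 1 * A 3 2 * A 4 0
      + A 0 3 * A 1 4 * A 2 2 * A 3 0 * A 4 1
      - A 0 3 * A 1 4 * A 2 2 * A 3 1 * A 4 0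
      + A 0 4 * A 1 0 * A 2 1 * A 3 2 * A 4 3
      - A 0 4 * A 1 0 * A 2 1 * A 3 3 * A 4 2
      - A 0 4 * A 1 0 * A 2 2 * A 3 1 * A 4 3
      + A 0 4 * A 1 0 * A 2 2 * A 3 3 * A 4 1
      + A 0 4 * A 1 0 * A 2 3 * A 3 1 * A 4 2
      - A 0 4 * A 1 0 * A 2 3 * A 3 2 * A 4 1
      - A 0 4 * A 1 1 * A 2 0 * A 3 2 * A 4 3
      + A 0 4 * A 1 1 * A 2 0 * A 3 3 * A 4 2
      + A 0 4 * A 1 1 * A 2 2 * A 3 0 * A 4 3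
      - A 0 4 * A 1 1 * A 2 2 * A 3 3 * A 4 0
      - A 0 4 * A 1 1 * A 2 3 * A 3 0 * A 4 2
      + A 0 4 * A 1 1 * A 2 3 * A 3 2 * A 4 0
      + A 0 4 * A 1 2 * A 2 0 * A 3 1 * A 4 3
      - A 0 4 * A 1 2 * A 2 0 * A 3 3 * A 4 1
      - A 0 4 * A 1 2 * A 2 1 * A 3 0 * A 4 3
      + A 0 4 * A 1 2 * A 2 1 * A 3 3 * A 4 0
      + A 0 4 * A 1 2 * A 2 3 * A 3 0 * A 4 1
      - A 0 4 * A 1 2 * A 2 3 * A 3 1 * A 4 0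
      - A 0 4 * A 1 3 * A 2 0 * A 3 1 * A 4 2
      + A 0 4 * A 1 3 * A 2 0 * A 3 2 * A 4 1
      + A 0 4 * A 1 3 * A 2 1 * A 3 0 * A 4 2
      - A 0 4 * A 1 3 * A 2 1 * A 3 2 * A 4 0
      - A 0 4 * A 1 3 * A 2 2 * A 3 0 * A 4 1
      + A 0 4 * A 1 3 * A 2 2 * A 3 1 * A 4 0 := by
  rw [Matrix.det_succ_row_zero, Fin.sum_univ_five]
  simp only [det_fin_4X, Matrix.submatrix_apply,
    show ((0:Fin 5):ℕ) = 0 from rfl, show ((1:Fin 5):ℕ) = 1 from rfl,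
    show ((2:Fin 5):ℕ) = 2 from rfl, show ((3:Fin 5):ℕ) = 3 from rfl,
    show ((4:Fin 5):ℕ) = 4 from rfl,
    show (Fin.succ (0:Fin 4)) = 1 by decide, show (Fin.succ (1:Fin 4)) = 2 by decide,
    show (Fin.succ (2:Fin 4)) = 3 by decide, show (Fin.succ (3:Fin 4)) = 4 by decide,
    show (Fin.succAbove (0:Fin 5) (0:Fin 4)) = 1 by decide,
    show (Fin.succAbove (0:Fin 5) (1:Fin 4)) = 2 by decide,
    show (Fin.succAbove (0:Fin 5) (2:Fin 4)) = 3 by decide,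
    show (Fin.succAbove (0:Fin 5) (3:Fin 4)) = 4 by decide,
    show (Fin.succAbove (1:Fin 5) (0:Fin 4)) = 0 by decide,
    show (Fin.succAbove (1:Fin 5) (1:Fin 4)) = 2 by decide,
    show (Fin.succAbove (1:Fin 5) (2:Fin 4)) = 3 by decide,
    show (Fin.succAbove (1:Fin 5) (3:Fin 4)) = 4 by decide,
    show (Fin.succAbove (2:Fin 5) (0:Fin 4)) = 0 by decide,
    show (Fin.succAbove (2:Fin 5) (1:Fin 4)) = 1 by decide,
    show (Fin.succAbove (2:Fin 5) (2:Fin 4)) = 3 by decide,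
    show (Fin.succAbove (2:Fin 5) (3:Fin 4)) = 4 by decide,
    show (Fin.succAbove (3:Fin 5) (0:Fin 4)) = 0 by decide,
    show (Fin.succAbove (3:Fin 5) (1:Fin 4)) = 1 by decide,
    show (Fin.succAbove (3:Fin 5) (2:Fin 4)) = 2 by decide,
    show (Fin.succAbove (3:Fin 5) (3:Fin 4)) = 4 by decide,
    show (Fin.succAbove (4:Fin 5) (0:Fin 4)) = 0 by decide,
    show (Fin.succAbove (4:Fin 5) (1:Fin 4)) = 1 by decide,
    show (Fin.succAbove (4:Fin 5) (2:Fin 4)) = 2 by decide,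
    show (Fin.succAbove (4:Fin 5) (3:Fin 4)) = 3 by decide]
  ring


noncomputable def Ssum (n : ℕ) (z : Fin n → ℝ) (a b : ℕ) : ℝ :=
  ∑ j : Fin n, if a ≤ (j : ℕ) ∧ (j : ℕ) ≤ b then z j else 0

lemma Ssum_single (n : ℕ) (z : Fin n → ℝ) (a : ℕ) (h : a < n) :
    Ssum n z a a = z ⟨a, h⟩ := by
  unfold Ssum
  rw [Finset.sum_eq_single (⟨a, h⟩ : Fin n)]
  · simp
  · intro b _ hb
    rw [if_neg]
    rintro ⟨h1, h2⟩
    exact hb (Fin.ext (le_antisymm h2 h1))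
  · intro h'; exact absurd (Finset.mem_univ _) h'

lemma Ssum_split (n : ℕ) (z : Fin n → ℝ) (a m b : ℕ) (h1 : a ≤ m + 1) (h2 : m ≤ b) :
    Ssum n z a b = Ssum n z a m + Ssum n z (m + 1) b := by
  unfold Ssum
  rw [← Finset.sum_add_distrib]
  refine Finset.sum_congr rfl fun j _ => ?_
  split_ifs <;> (try (exfalso; omega)) <;> ring

lemma Ssum_const (n : ℕ) (z : Fin n → ℝ) (a b : ℕ) (c : ℝ) (hb : b < n)
    (hc : ∀ j : Fin n, a ≤ (j : ℕ) → (j : ℕ) ≤ b → z j = c) :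
    Ssum n z a b = ((b + 1 - a : ℕ) : ℝ) * c := by
  unfold Ssum
  have h1 : ∀ j : Fin n, (if a ≤ (j : ℕ) ∧ (j : ℕ) ≤ b then z j else 0)
      = (if a ≤ (j : ℕ) ∧ (j : ℕ) ≤ b then c else 0) := by
    intro j; split_ifs with h
    · exact hc j h.1 h.2
    · rfl
  rw [Finset.sum_congr rfl fun j _ => h1 j, Finset.sum_ite, Finset.sum_const,
    Finset.sum_const_zero, add_zero]
  have h2 : (Finset.univ.filter fun j : Fin n => a ≤ (j : ℕ) ∧ (j : ℕ) ≤ b).card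
      = b + 1 - a := by
    rw [Finset.card_filter]
    rw [Fin.sum_univ_eq_sum_range (fun j => if a ≤ j ∧ j ≤ b then 1 else 0) n]
    rw [← Finset.card_filter]
    have h3 : (Finset.range n).filter (fun j => a ≤ j ∧ j ≤ b) = Finset.Icc a b := by
      ext j; simp only [Finset.mem_filter, Finset.mem_range, Finset.mem_Icc]; omega
    rw [h3, Nat.card_Icc]
  rw [h2, nsmul_eq_mul]

lemma kk_facts (e : ℕ) (he : 4 ≤ e) :
    3 ≤ kk e ∧ 2 * tt e + kk e * (kk e - 1) = 2 * e ∧ tt e < kk e := by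
  have h3 : 3 ≤ kk e := Nat.le_findGreatest (by omega) (by omega)
  have hspec : kk e * (kk e - 1) ≤ 2 * e :=
    Nat.findGreatest_spec (P := fun k => k * (k - 1) ≤ 2 * e) (m := 3) (by omega) (by omega)
  have hle : kk e ≤ e + 2 := Nat.findGreatest_le _
  have hne : kk e ≠ e + 2 := by
    intro h
    rw [h, show e + 2 - 1 = e + 1 from rfl] at hspec
    nlinarith
  have hgr : ¬((kk e + 1) * (kk e + 1 - 1) ≤ 2 * e) :=
    Nat.findGreatest_is_greatest (P := fun k => k * (k - 1) ≤ 2 * e) (n := e + 2)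
      (Nat.lt_succ_self _) (by omega)
  rw [show kk e + 1 - 1 = kk e from rfl] at hgr
  have hgr' : 2 * e < (kk e + 1) * kk e := by omega
  have heven : 2 * (kk e * (kk e - 1) / 2) = kk e * (kk e - 1) :=
    Nat.two_mul_div_two_of_even (Nat.even_mul_pred_self _)
  have ht' : tt e = e - kk e * (kk e - 1) / 2 := rfl
  have hk1 : (kk e + 1) * kk e = kk e * (kk e - 1) + 2 * kk e := by
    obtain ⟨m, hm⟩ : ∃ m, kk e = m + 1 := ⟨kk e - 1, by omega⟩
    rw [hm, Nat.add_sub_cancel]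
    ring
  constructor
  · exact h3
  constructor
  · omega
  · omega

lemma adjD_iff (n e : ℕ) (htk : tt e < kk e) (i j : Fin n) :
    (graphD n e).Adj i j ↔ ((i : ℕ) ≠ (j : ℕ) ∧ ((i : ℕ) = 0 ∨ (j : ℕ) = 0 ∨
      ((i : ℕ) ≤ kk e ∧ (j : ℕ) ≤ kk e) ∨ ((j : ℕ) = kk e + 1 ∧ (i : ℕ) ≤ tt e) ∨
      ((i : ℕ) = kk e + 1 ∧ (j : ℕ) ≤ tt e))) := by
  unfold graphD
  rw [SimpleGraph.fromRel_adj]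
  simp only [ne_eq, Fin.ext_iff]
  constructor
  · rintro ⟨h1, h2⟩
    refine ⟨h1, ?_⟩
    omega
  · rintro ⟨h1, h2⟩
    refine ⟨h1, ?_⟩
    omega

lemma mulVec_ite (n e : ℕ) (z : Fin n → ℝ) (i : Fin n) :
    ((graphD n e).adjMatrix ℝ *ᵥ z) i
      = ∑ j : Fin n, if (graphD n e).Adj i j then z j else 0 := by
  rw [Matrix.mulVec]
  refine Finset.sum_congr rfl fun j _ => ?_
  simp only [SimpleGraph.adjMatrix_apply, ite_mul, one_mul, zero_mul]

lemma row0 (n e : ℕ) (htk : tt e < kk e) (z : Fin n → ℝ) (i : Fin n) (hi : (i : ℕ) = 0) :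
    ((graphD n e).adjMatrix ℝ *ᵥ z) i = Ssum n z 1 (n - 1) := by
  rw [mulVec_ite]
  refine Finset.sum_congr rfl fun j _ => ?_
  rw [adjD_iff n e htk]
  have hj := j.isLt
  split_ifs <;> first | rfl | (exfalso; omega)

lemma rowA (n e : ℕ) (he : 4 ≤ e) (hn : kk e + 2 ≤ n) (z : Fin n → ℝ) (i : Fin n)
    (h1 : 1 ≤ (i : ℕ)) (h2 : (i : ℕ) ≤ tt e) (htk : tt e < kk e) :
    ((graphD n e).adjMatrix ℝ *ᵥ z) i
      = z ⟨0, by omega⟩ + (Ssum n z 1 (kk e) - z i) + z ⟨kk e + 1, by omega⟩ := by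
  rw [mulVec_ite]
  have key : ∀ j : Fin n, (if (graphD n e).Adj i j then z j else 0)
      = (if 0 ≤ (j : ℕ) ∧ (j : ℕ) ≤ 0 then z j else 0)
        + ((if 1 ≤ (j : ℕ) ∧ (j : ℕ) ≤ kk e then z j else 0)
            - (if (i : ℕ) ≤ (j : ℕ) ∧ (j : ℕ) ≤ (i : ℕ) then z j else 0))
        + (if kk e + 1 ≤ (j : ℕ) ∧ (j : ℕ) ≤ kk e + 1 then z j else 0) := by
    intro j
    rw [adjD_iff n e htk]
    split_ifs <;> (try (exfalso; omega)) <;> ring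
  rw [Finset.sum_congr rfl fun j _ => key j]
  rw [Finset.sum_add_distrib, Finset.sum_add_distrib, Finset.sum_sub_distrib]
  have e0 : (∑ j : Fin n, if 0 ≤ (j : ℕ) ∧ (j : ℕ) ≤ 0 then z j else 0) = z ⟨0, by omega⟩ :=
    Ssum_single n z 0 (by omega)
  have e1 : (∑ j : Fin n, if (i:ℕ) ≤ (j : ℕ) ∧ (j : ℕ) ≤ (i:ℕ) then z j else 0) = z i := by
    have h := Ssum_single n z (i : ℕ) i.isLt
    rw [Fin.eta] at h
    exact h
  have e2 : (∑ j : Fin n, if kk e + 1 ≤ (j : ℕ) ∧ (j : ℕ) ≤ kk e + 1 then z j else 0)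
      = z ⟨kk e + 1, by omega⟩ := Ssum_single n z (kk e + 1) (by omega)
  rw [e0, e1, e2]
  rfl

lemma rowB (n e : ℕ) (he : 4 ≤ e) (hn : kk e + 2 ≤ n) (z : Fin n → ℝ) (i : Fin n)
    (h1 : tt e + 1 ≤ (i : ℕ)) (h2 : (i : ℕ) ≤ kk e) (htk : tt e < kk e) :
    ((graphD n e).adjMatrix ℝ *ᵥ z) i
      = z ⟨0, by omega⟩ + (Ssum n z 1 (kk e) - z i) := by
  rw [mulVec_ite]
  have key : ∀ j : Fin n, (if (graphD n e).Adj i j then z j else 0)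
      = (if 0 ≤ (j : ℕ) ∧ (j : ℕ) ≤ 0 then z j else 0)
        + ((if 1 ≤ (j : ℕ) ∧ (j : ℕ) ≤ kk e then z j else 0)
            - (if (i : ℕ) ≤ (j : ℕ) ∧ (j : ℕ) ≤ (i : ℕ) then z j else 0)) := by
    intro j
    rw [adjD_iff n e htk]
    split_ifs <;> (try (exfalso; omega)) <;> ring
  rw [Finset.sum_congr rfl fun j _ => key j]
  rw [Finset.sum_add_distrib, Finset.sum_sub_distrib]
  have e0 : (∑ j : Fin n, if 0 ≤ (j : ℕ) ∧ (j : ℕ) ≤ 0 then z j else 0) = z ⟨0, by omega⟩ :=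
    Ssum_single n z 0 (by omega)
  have e1 : (∑ j : Fin n, if (i:ℕ) ≤ (j : ℕ) ∧ (j : ℕ) ≤ (i:ℕ) then z j else 0) = z i := by
    have h := Ssum_single n z (i : ℕ) i.isLt
    rw [Fin.eta] at h
    exact h
  rw [e0, e1]
  rfl

lemma rowC (n e : ℕ) (he : 4 ≤ e) (hn : kk e + 2 ≤ n) (z : Fin n → ℝ) (i : Fin n)
    (h1 : (i : ℕ) = kk e + 1) (htk : tt e < kk e) :
    ((graphD n e).adjMatrix ℝ *ᵥ z) i = z ⟨0, by omega⟩ + Ssum n z 1 (tt e) := by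
  rw [mulVec_ite]
  have key : ∀ j : Fin n, (if (graphD n e).Adj i j then z j else 0)
      = (if 0 ≤ (j : ℕ) ∧ (j : ℕ) ≤ 0 then z j else 0)
        + (if 1 ≤ (j : ℕ) ∧ (j : ℕ) ≤ tt e then z j else 0) := by
    intro j
    rw [adjD_iff n e htk]
    split_ifs <;> (try (exfalso; omega)) <;> ring
  rw [Finset.sum_congr rfl fun j _ => key j]
  rw [Finset.sum_add_distrib]
  have e0 : (∑ j : Fin n, if 0 ≤ (j : ℕ) ∧ (j : ℕ) ≤ 0 then z j else 0) = z ⟨0, by omega⟩ :=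
    Ssum_single n z 0 (by omega)
  rw [e0]
  rfl

lemma rowD (n e : ℕ) (he : 4 ≤ e) (hn : kk e + 2 ≤ n) (z : Fin n → ℝ) (i : Fin n)
    (h1 : kk e + 2 ≤ (i : ℕ)) (htk : tt e < kk e) :
    ((graphD n e).adjMatrix ℝ *ᵥ z) i = z ⟨0, by omega⟩ := by
  rw [mulVec_ite]
  have key : ∀ j : Fin n, (if (graphD n e).Adj i j then z j else 0)
      = (if 0 ≤ (j : ℕ) ∧ (j : ℕ) ≤ 0 then z j else 0) := by
    intro j
    rw [adjD_iff n e htk]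
    have hj := j.isLt
    split_ifs <;> (try (exfalso; omega)) <;> ring
  rw [Finset.sum_congr rfl fun j _ => key j]
  exact Ssum_single n z 0 (by omega)


theorem stmt_1 (e n : ℕ) (he : 4 ≤ e) (ht : 1 ≤ tt e) (hn : bb e ≤ n)
    (γ : ℝ) (hγ : γ = specRad (graphD n e))
    (y : Fin n → ℝ) (hy : ((graphD n e).adjMatrix ℝ).mulVec y = γ • y)
    (hpos : ∀ i, 0 < y i) :
    (∀ p q : Fin n, 1 ≤ (p : ℕ) → (p : ℕ) ≤ tt e → 1 ≤ (q : ℕ) → (q : ℕ) ≤ tt e →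
      y p = y q) ∧
    (∀ p q : Fin n, tt e + 1 ≤ (p : ℕ) → (p : ℕ) ≤ kk e →
      tt e + 1 ≤ (q : ℕ) → (q : ℕ) ≤ kk e → y p = y q) ∧
    (∀ p q : Fin n, kk e + 2 ≤ (p : ℕ) → kk e + 2 ≤ (q : ℕ) → y p = y q) ∧
    (∀ v1 v2 vk vk1 vn : Fin n, (v1 : ℕ) = 0 → (v2 : ℕ) = 1 → (vk : ℕ) = kk e →
      (vk1 : ℕ) = kk e + 1 → (vn : ℕ) = n - 1 →
      ((γ + 1) * y v1 = y v1 + (tt e : ℝ) * y v2 + ((kk e : ℝ) - (tt e : ℝ)) * y vk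
          + y vk1 + ((n : ℝ) - (kk e : ℝ) - 2) * y vn) ∧
      ((γ + 1) * y v2 = y v1 + (tt e : ℝ) * y v2 + ((kk e : ℝ) - (tt e : ℝ)) * y vk + y vk1) ∧
      ((γ + 1) * y vk = y v1 + (tt e : ℝ) * y v2 + ((kk e : ℝ) - (tt e : ℝ)) * y vk) ∧
      (γ * y vk1 = y v1 + (tt e : ℝ) * y v2) ∧
      (kk e + 2 < n → γ * y vn = y v1)) ∧
    IsGreatestZero (fun x : ℝ =>
      x * (x + 1) * (x ^ 3 - x ^ 2 * ((kk e : ℝ) - 1) - x * ((kk e : ℝ) + (tt e : ℝ) + 1)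
          + ((tt e : ℝ) + 1) * ((kk e : ℝ) - (tt e : ℝ) - 1))
        - ((n : ℝ) - (kk e : ℝ) - 2) * (x ^ 3 - x ^ 2 * ((kk e : ℝ) - 2)
          - x * ((kk e : ℝ) + (tt e : ℝ) - 1) + (tt e : ℝ) * ((kk e : ℝ) - (tt e : ℝ) - 1))) γ := by
  obtain ⟨hk3, hkt2, htk⟩ := kk_facts e he
  have hn' : kk e + 2 ≤ n := by
    have hbb : bb e = kk e + 2 := by
      unfold bb
      rw [if_neg (by omega), if_neg (by omega)]
    omega
  have h0n : 0 < n := by omega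
  have h1n : 1 < n := by omega
  have htn : tt e < n := by omega
  have ht1n : tt e + 1 < n := by omega
  have hkn : kk e < n := by omega
  have hk1n : kk e + 1 < n := by omega
  have hn1n : n - 1 < n := by omega
  have hyi : ∀ i : Fin n, ((graphD n e).adjMatrix ℝ *ᵥ y) i = γ * y i := by
    intro i
    rw [hy]
    simp
  have hγ0 : 0 < γ := by
    have h0 := hyi ⟨0, h0n⟩
    rw [row0 n e htk y ⟨0, h0n⟩ rfl] at h0
    have hS : 0 < Ssum n y 1 (n - 1) := by
      unfold Ssum
      apply Finset.sum_pos'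
      · intro j _
        split_ifs
        · exact (hpos j).le
        · exact le_refl 0
      · refine ⟨⟨1, h1n⟩, Finset.mem_univ _, ?_⟩
        rw [if_pos (show 1 ≤ ((⟨1, h1n⟩ : Fin n) : ℕ) ∧ ((⟨1, h1n⟩ : Fin n) : ℕ) ≤ n - 1 by
          refine ⟨le_refl _, ?_⟩
          show 1 ≤ n - 1
          omega)]
        exact hpos _
    nlinarith [hpos ⟨0, h0n⟩]
  have part1 : ∀ p q : Fin n, 1 ≤ (p : ℕ) → (p : ℕ) ≤ tt e → 1 ≤ (q : ℕ) → (q : ℕ) ≤ tt e →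
      y p = y q := by
    intro p q hp1 hp2 hq1 hq2
    have hp := hyi p
    rw [rowA n e he hn' y p hp1 hp2 htk] at hp
    have hq := hyi q
    rw [rowA n e he hn' y q hq1 hq2 htk] at hq
    have hz : (γ + 1) * (y p - y q) = 0 := by linear_combination hq - hp
    rcases mul_eq_zero.mp hz with h | h
    · linarith
    · linarith
  have part2 : ∀ p q : Fin n, tt e + 1 ≤ (p : ℕ) → (p : ℕ) ≤ kk e →
      tt e + 1 ≤ (q : ℕ) → (q : ℕ) ≤ kk e → y p = y q := by
    intro p q hp1 hp2 hq1 hq2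
    have hp := hyi p
    rw [rowB n e he hn' y p hp1 hp2 htk] at hp
    have hq := hyi q
    rw [rowB n e he hn' y q hq1 hq2 htk] at hq
    have hz : (γ + 1) * (y p - y q) = 0 := by linear_combination hq - hp
    rcases mul_eq_zero.mp hz with h | h
    · linarith
    · linarith
  have part3 : ∀ p q : Fin n, kk e + 2 ≤ (p : ℕ) → kk e + 2 ≤ (q : ℕ) → y p = y q := by
    intro p q hp hq
    have h1 := hyi p
    rw [rowD n e he hn' y p hp htk] at h1
    have h2 := hyi q
    rw [rowD n e he hn' y q hq htk] at h2
    have h3 : γ * y p = γ * y q := by rw [← h1, ← h2]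
    exact mul_left_cancel₀ (ne_of_gt hγ0) h3
  -- sums of y over the classes
  have hS1t : Ssum n y 1 (tt e) = (tt e : ℝ) * y ⟨1, h1n⟩ := by
    rw [Ssum_const n y 1 (tt e) (y ⟨1, h1n⟩) (by omega)
      (fun j hj1 hj2 => part1 j ⟨1, h1n⟩ hj1 hj2 (le_refl _) ht)]
    norm_num
  have hStk : Ssum n y (tt e + 1) (kk e) = ((kk e : ℝ) - (tt e : ℝ)) * y ⟨kk e, hkn⟩ := by
    rw [Ssum_const n y (tt e + 1) (kk e) (y ⟨kk e, hkn⟩) (by omega)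
      (fun j hj1 hj2 => part2 j ⟨kk e, hkn⟩ hj1 hj2 (show tt e + 1 ≤ kk e by omega) (le_refl _))]
    rw [show kk e + 1 - (tt e + 1) = kk e - tt e by omega, Nat.cast_sub htk.le]
  have hSk1 : Ssum n y (kk e + 1) (kk e + 1) = y ⟨kk e + 1, hk1n⟩ :=
    Ssum_single n y (kk e + 1) (by omega)
  have hSD : Ssum n y (kk e + 2) (n - 1) = ((n : ℝ) - (kk e : ℝ) - 2) * y ⟨n - 1, hn1n⟩ := by
    rw [Ssum_const n y (kk e + 2) (n - 1) (y ⟨n - 1, hn1n⟩) (by omega)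
      (fun j hj1 hj2 => part3 j ⟨n - 1, hn1n⟩ hj1 (by
        show kk e + 2 ≤ n - 1
        omega))]
    rw [show n - 1 + 1 - (kk e + 2) = n - (kk e + 2) by omega, Nat.cast_sub hn']
    push_cast
    ring
  have part4 : ∀ v1 v2 vk vk1 vn : Fin n, (v1 : ℕ) = 0 → (v2 : ℕ) = 1 → (vk : ℕ) = kk e →
      (vk1 : ℕ) = kk e + 1 → (vn : ℕ) = n - 1 →
      ((γ + 1) * y v1 = y v1 + (tt e : ℝ) * y v2 + ((kk e : ℝ) - (tt e : ℝ)) * y vk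
          + y vk1 + ((n : ℝ) - (kk e : ℝ) - 2) * y vn) ∧
      ((γ + 1) * y v2 = y v1 + (tt e : ℝ) * y v2 + ((kk e : ℝ) - (tt e : ℝ)) * y vk + y vk1) ∧
      ((γ + 1) * y vk = y v1 + (tt e : ℝ) * y v2 + ((kk e : ℝ) - (tt e : ℝ)) * y vk) ∧
      (γ * y vk1 = y v1 + (tt e : ℝ) * y v2) ∧
      (kk e + 2 < n → γ * y vn = y v1) := by
    intro v1 v2 vk vk1 vn h1 h2 h3 h4 h5
    have hv1 : v1 = ⟨0, h0n⟩ := Fin.ext h1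
    have hv2 : v2 = ⟨1, h1n⟩ := Fin.ext h2
    have hvk : vk = ⟨kk e, hkn⟩ := Fin.ext h3
    have hvk1 : vk1 = ⟨kk e + 1, hk1n⟩ := Fin.ext h4
    have hvn : vn = ⟨n - 1, hn1n⟩ := Fin.ext h5
    subst hv1 hv2 hvk hvk1 hvn
    have hE1 := hyi ⟨0, h0n⟩
    rw [row0 n e htk y ⟨0, h0n⟩ rfl,
      Ssum_split n y 1 (tt e) (n - 1) (by omega) (by omega),
      Ssum_split n y (tt e + 1) (kk e) (n - 1) (by omega) (by omega),
      Ssum_split n y (kk e + 1) (kk e + 1) (n - 1) (by omega) (by omega),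
      hS1t, hStk, hSk1, hSD] at hE1
    have hE2 := hyi ⟨1, h1n⟩
    rw [rowA n e he hn' y ⟨1, h1n⟩ (le_refl _) ht htk,
      Ssum_split n y 1 (tt e) (kk e) (by omega) (by omega), hS1t, hStk] at hE2
    have hE3 := hyi ⟨kk e, hkn⟩
    rw [rowB n e he hn' y ⟨kk e, hkn⟩ (show tt e + 1 ≤ kk e by omega) (le_refl _) htk,
      Ssum_split n y 1 (tt e) (kk e) (by omega) (by omega), hS1t, hStk] at hE3
    have hE4 := hyi ⟨kk e + 1, hk1n⟩
    rw [rowC n e he hn' y ⟨kk e + 1, hk1n⟩ rfl htk, hS1t] at hE4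
    refine ⟨by linear_combination -hE1, by linear_combination -hE2, by linear_combination -hE3,
      by linear_combination -hE4, ?_⟩
    intro hlt
    have hE5 := hyi ⟨n - 1, hn1n⟩
    rw [rowD n e he hn' y ⟨n - 1, hn1n⟩ (by
      show kk e + 2 ≤ n - 1
      omega) htk] at hE5
    linear_combination -hE5
  refine ⟨part1, part2, part3, part4, ?_, ?_⟩
  · -- γ is a zero
    show γ * (γ + 1) * (γ ^ 3 - γ ^ 2 * ((kk e : ℝ) - 1) - γ * ((kk e : ℝ) + (tt e : ℝ) + 1)
          + ((tt e : ℝ) + 1) * ((kk e : ℝ) - (tt e : ℝ) - 1))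
        - ((n : ℝ) - (kk e : ℝ) - 2) * (γ ^ 3 - γ ^ 2 * ((kk e : ℝ) - 2)
          - γ * ((kk e : ℝ) + (tt e : ℝ) - 1) + (tt e : ℝ) * ((kk e : ℝ) - (tt e : ℝ) - 1)) = 0
    obtain ⟨E1, E2, E3, E4, E5⟩ := part4 ⟨0, h0n⟩ ⟨1, h1n⟩ ⟨kk e, hkn⟩
      ⟨kk e + 1, hk1n⟩ ⟨n - 1, hn1n⟩ rfl rfl rfl rfl rfl
    obtain ⟨g, H1, H5⟩ : ∃ g : ℝ, (γ * y ⟨0, h0n⟩ = (tt e : ℝ) * y ⟨1, h1n⟩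
        + ((kk e : ℝ) - (tt e : ℝ)) * y ⟨kk e, hkn⟩ + y ⟨kk e + 1, hk1n⟩
        + ((n : ℝ) - (kk e : ℝ) - 2) * g) ∧ γ * g = y ⟨0, h0n⟩ := by
      rcases eq_or_lt_of_le hn' with heq | hlt
      · refine ⟨y ⟨0, h0n⟩ / γ, ?_, by field_simp⟩
        have hz : (n : ℝ) - (kk e : ℝ) - 2 = 0 := by
          rw [← heq]
          push_cast
          ring
        linear_combination E1 + (y ⟨n - 1, hn1n⟩ - y ⟨0, h0n⟩ / γ) * hz
      · exact ⟨y ⟨n - 1, hn1n⟩, by linear_combination E1, E5 hlt⟩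
    have key : (γ * (γ + 1) * (γ ^ 3 - γ ^ 2 * ((kk e : ℝ) - 1) - γ * ((kk e : ℝ) + (tt e : ℝ) + 1)
          + ((tt e : ℝ) + 1) * ((kk e : ℝ) - (tt e : ℝ) - 1))
        - ((n : ℝ) - (kk e : ℝ) - 2) * (γ ^ 3 - γ ^ 2 * ((kk e : ℝ) - 2)
          - γ * ((kk e : ℝ) + (tt e : ℝ) - 1) + (tt e : ℝ) * ((kk e : ℝ) - (tt e : ℝ) - 1)))
        * y ⟨0, h0n⟩ = 0 := by
      linear_combination
        (γ ^ 4 - (kk e : ℝ) * γ ^ 3 + 2 * γ ^ 3 - (kk e : ℝ) * γ ^ 2 - (tt e : ℝ) * γ ^ 2 + γ ^ 2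
          + (kk e : ℝ) * (tt e : ℝ) * γ - (tt e : ℝ) ^ 2 * γ - (tt e : ℝ) * γ) * H1
        + ((tt e : ℝ) * γ ^ 3 + 2 * (tt e : ℝ) * γ ^ 2 - (kk e : ℝ) * (tt e : ℝ) * γ
          + (tt e : ℝ) ^ 2 * γ + (tt e : ℝ) * γ) * E2
        + ((kk e : ℝ) * γ ^ 3 - (tt e : ℝ) * γ ^ 3 + (kk e : ℝ) * γ ^ 2 - (tt e : ℝ) * γ ^ 2) * E3
        + (γ ^ 3 - (kk e : ℝ) * γ ^ 2 + (tt e : ℝ) * γ ^ 2 + 2 * γ ^ 2 - (kk e : ℝ) * γ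
          + (tt e : ℝ) * γ + γ) * E4
        + (((n : ℝ) - (kk e : ℝ) - 2) * (γ ^ 3 - (kk e : ℝ) * γ ^ 2 + 2 * γ ^ 2 - (kk e : ℝ) * γ
          - (tt e : ℝ) * γ + γ + (kk e : ℝ) * (tt e : ℝ) - (tt e : ℝ) ^ 2 - (tt e : ℝ))) * H5
    rcases mul_eq_zero.mp key with h | h
    · exact h
    · exact absurd h (ne_of_gt (hpos _))
  · -- every zero is at most γ
    intro x hx
    have hx' : x * (x + 1) * (x ^ 3 - x ^ 2 * ((kk e : ℝ) - 1) - x * ((kk e : ℝ) + (tt e : ℝ) + 1)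
          + ((tt e : ℝ) + 1) * ((kk e : ℝ) - (tt e : ℝ) - 1))
        - ((n : ℝ) - (kk e : ℝ) - 2) * (x ^ 3 - x ^ 2 * ((kk e : ℝ) - 2)
          - x * ((kk e : ℝ) + (tt e : ℝ) - 1) + (tt e : ℝ) * ((kk e : ℝ) - (tt e : ℝ) - 1)) = 0 := hx
    by_cases hx0 : x ≤ 0
    · linarith
    push_neg at hx0
    have hdet : (!![x, -(tt e : ℝ), (tt e : ℝ) - (kk e : ℝ), -1, -((n : ℝ) - (kk e : ℝ) - 2);
        -1, x - (tt e : ℝ) + 1, (tt e : ℝ) - (kk e : ℝ), -1, 0;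
        -1, -(tt e : ℝ), x - (kk e : ℝ) + (tt e : ℝ) + 1, 0, 0;
        -1, -(tt e : ℝ), 0, x, 0;
        -1, 0, 0, 0, x]).det = 0 := by
      rw [det_fin_5X]
      simp only [Matrix.of_apply, Matrix.cons_val', Matrix.cons_val_zero, Matrix.cons_val_one,
        Matrix.cons_val_two, Matrix.cons_val_three, Matrix.cons_val_four, Matrix.head_cons,
        Matrix.tail_cons, Matrix.head_fin_const, Matrix.empty_val', Matrix.cons_val_fin_one]
      linear_combination hx'
    obtain ⟨w, hw, hww⟩ := Matrix.exists_mulVec_eq_zero_iff.mpr hdet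
    have R0 := congrFun hww 0
    have R1 := congrFun hww 1
    have R2 := congrFun hww 2
    have R3 := congrFun hww 3
    have R4 := congrFun hww 4
    simp only [Matrix.mulVec, dotProduct, Fin.sum_univ_five, Matrix.of_apply,
      Matrix.cons_val', Matrix.cons_val_zero, Matrix.cons_val_one, Matrix.cons_val_two,
      Matrix.cons_val_three, Matrix.cons_val_four, Matrix.head_cons, Matrix.tail_cons,
      Matrix.head_fin_const, Matrix.empty_val', Matrix.cons_val_fin_one,
      Pi.zero_apply] at R0 R1 R2 R3 R4
    obtain ⟨v, hv_eq⟩ : ∃ v : Fin n → ℝ, ∀ j : Fin n, v j =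
        (if (j : ℕ) = 0 then w 0 else if (j : ℕ) ≤ tt e then w 1 else if (j : ℕ) ≤ kk e then w 2
          else if (j : ℕ) = kk e + 1 then w 3 else w 4) := ⟨_, fun j => rfl⟩
    have hva0 : ∀ j : Fin n, (j : ℕ) = 0 → v j = w 0 := by
      intro j hj
      rw [hv_eq j, if_pos hj]
    have hva1 : ∀ j : Fin n, 1 ≤ (j : ℕ) → (j : ℕ) ≤ tt e → v j = w 1 := by
      intro j hj1 hj2
      rw [hv_eq j]
      split_ifs <;> first | rfl | (exfalso; omega)
    have hva2 : ∀ j : Fin n, tt e + 1 ≤ (j : ℕ) → (j : ℕ) ≤ kk e → v j = w 2 := by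
      intro j hj1 hj2
      rw [hv_eq j]
      split_ifs <;> first | rfl | (exfalso; omega)
    have hva3 : ∀ j : Fin n, (j : ℕ) = kk e + 1 → v j = w 3 := by
      intro j hj
      rw [hv_eq j]
      split_ifs <;> first | rfl | (exfalso; omega)
    have hva4 : ∀ j : Fin n, kk e + 2 ≤ (j : ℕ) → v j = w 4 := by
      intro j hj
      rw [hv_eq j]
      split_ifs <;> first | rfl | (exfalso; omega)
    have hSv1 : Ssum n v 1 (tt e) = (tt e : ℝ) * w 1 := by
      rw [Ssum_const n v 1 (tt e) (w 1) (by omega) hva1]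
      norm_num
    have hSv2 : Ssum n v (tt e + 1) (kk e) = ((kk e : ℝ) - (tt e : ℝ)) * w 2 := by
      rw [Ssum_const n v (tt e + 1) (kk e) (w 2) (by omega) hva2,
        show kk e + 1 - (tt e + 1) = kk e - tt e by omega, Nat.cast_sub htk.le]
    have hSv3 : Ssum n v (kk e + 1) (kk e + 1) = w 3 := by
      rw [Ssum_single n v (kk e + 1) (by omega)]
      exact hva3 _ rfl
    have hSv4 : Ssum n v (kk e + 2) (n - 1) = ((n : ℝ) - (kk e : ℝ) - 2) * w 4 := by
      rw [Ssum_const n v (kk e + 2) (n - 1) (w 4) (by omega) (fun j hj1 _ => hva4 j hj1)]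
      rw [show n - 1 + 1 - (kk e + 2) = n - (kk e + 2) by omega, Nat.cast_sub hn']
      push_cast
      ring
    have hAv : (graphD n e).adjMatrix ℝ *ᵥ v = x • v := by
      funext i
      rw [Pi.smul_apply, smul_eq_mul]
      by_cases c0 : (i : ℕ) = 0
      · rw [row0 n e htk v i c0, hva0 i c0,
          Ssum_split n v 1 (tt e) (n - 1) (by omega) (by omega),
          Ssum_split n v (tt e + 1) (kk e) (n - 1) (by omega) (by omega),
          Ssum_split n v (kk e + 1) (kk e + 1) (n - 1) (by omega) (by omega),
          hSv1, hSv2, hSv3, hSv4]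
        first
        | linear_combination -R0
        | linear_combination R0
      by_cases c1 : (i : ℕ) ≤ tt e
      · have h1i : 1 ≤ (i : ℕ) := by omega
        rw [rowA n e he hn' v i h1i c1 htk, hva1 i h1i c1, hva0 ⟨0, h0n⟩ rfl,
          hva3 ⟨kk e + 1, hk1n⟩ rfl,
          Ssum_split n v 1 (tt e) (kk e) (by omega) (by omega), hSv1, hSv2]
        first
        | linear_combination -R1
        | linear_combination R1
      by_cases c2 : (i : ℕ) ≤ kk e
      · have h1i : tt e + 1 ≤ (i : ℕ) := by omega
        rw [rowB n e he hn' v i h1i c2 htk, hva2 i h1i c2, hva0 ⟨0, h0n⟩ rfl,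
          Ssum_split n v 1 (tt e) (kk e) (by omega) (by omega), hSv1, hSv2]
        first
        | linear_combination -R2
        | linear_combination R2
      by_cases c3 : (i : ℕ) = kk e + 1
      · rw [rowC n e he hn' v i c3 htk, hva3 i c3, hva0 ⟨0, h0n⟩ rfl, hSv1]
        first
        | linear_combination -R3
        | linear_combination R3
      · have h1i : kk e + 2 ≤ (i : ℕ) := by omega
        rw [rowD n e he hn' v i h1i htk, hva4 i h1i, hva0 ⟨0, h0n⟩ rfl]
        first
        | linear_combination -R4
        | linear_combination R4
    have hvne : v ≠ 0 := by
      intro hcontra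
      apply hw
      have h0 : w 0 = 0 := by
        have := congrFun hcontra ⟨0, h0n⟩
        rw [hva0 ⟨0, h0n⟩ rfl] at this
        exact this
      have h1 : w 1 = 0 := by
        have := congrFun hcontra ⟨1, h1n⟩
        rw [hva1 ⟨1, h1n⟩ (le_refl _) ht] at this
        exact this
      have h2 : w 2 = 0 := by
        have := congrFun hcontra ⟨tt e + 1, ht1n⟩
        rw [hva2 ⟨tt e + 1, ht1n⟩ (le_refl _) htk] at this
        exact this
      have h3 : w 3 = 0 := by
        have := congrFun hcontra ⟨kk e + 1, hk1n⟩
        rw [hva3 ⟨kk e + 1, hk1n⟩ rfl] at this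
        exact this
      have h4 : w 4 = 0 := by
        have hx4 : x * w 4 = 0 := by
          first
          | linear_combination R4 + h0
          | linear_combination R4 - h0
          | linear_combination -R4 + h0
          | linear_combination -R4 - h0
        rcases mul_eq_zero.mp hx4 with h | h
        · exact absurd h (ne_of_gt hx0)
        · exact h
      funext j
      fin_cases j
      · exact h0
      · exact h1
      · exact h2
      · exact h3
      · exact h4
    have hbdd : BddAbove {r : ℝ | ∃ μ : ℝ, (∃ v0 : Fin n → ℝ, v0 ≠ 0 ∧
        ((graphD n e).adjMatrix ℝ) *ᵥ v0 = μ • v0) ∧ r = |μ|} := by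
      refine ⟨(n : ℝ), ?_⟩
      rintro r ⟨μ, ⟨u, hu0, huv⟩, rfl⟩
      obtain ⟨i, -, hmax⟩ := Finset.exists_max_image Finset.univ (fun j => |u j|)
        ⟨⟨0, h0n⟩, Finset.mem_univ _⟩
      have hui : 0 < |u i| := by
        obtain ⟨j, hj⟩ := Function.ne_iff.mp hu0
        have hj' : u j ≠ 0 := by simpa using hj
        exact lt_of_lt_of_le (abs_pos.mpr hj') (hmax j (Finset.mem_univ j))
      have h1 : ((graphD n e).adjMatrix ℝ *ᵥ u) i = μ * u i := by
        rw [huv]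
        simp
      have hmu : |μ| * |u i| ≤ (n : ℝ) * |u i| := by
        calc |μ| * |u i| = |μ * u i| := (abs_mul μ (u i)).symm
          _ = |((graphD n e).adjMatrix ℝ *ᵥ u) i| := by rw [h1]
          _ = |∑ j : Fin n, if (graphD n e).Adj i j then u j else 0| := by rw [mulVec_ite]
          _ ≤ ∑ j : Fin n, |if (graphD n e).Adj i j then u j else 0| :=
              Finset.abs_sum_le_sum_abs _ _
          _ ≤ ∑ _j : Fin n, |u i| := by
              refine Finset.sum_le_sum fun j _ => ?_
              split_ifs
              · exact hmax j (Finset.mem_univ j)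
              · rw [abs_zero]
                exact abs_nonneg _
          _ = (n : ℝ) * |u i| := by
              rw [Finset.sum_const, Finset.card_univ, Fintype.card_fin, nsmul_eq_mul]
      exact le_of_mul_le_mul_right hmu hui
    have hmem : |x| ∈ {r : ℝ | ∃ μ : ℝ, (∃ v0 : Fin n → ℝ, v0 ≠ 0 ∧
        ((graphD n e).adjMatrix ℝ) *ᵥ v0 = μ • v0) ∧ r = |μ|} := ⟨x, ⟨v, hvne, hAv⟩, rfl⟩
    rw [hγ]
    exact le_trans (le_abs_self x) (le_csSup hbdd hmem)
end

section
/- Let e ≥ 4 and n ≥ e+2 be integers, and let χ = ρ(V_{n,e}). Suppose z is an eigenvector of the adjacency matrix of V_{n,e} with eigenvalue χ all of whose entries are positive. Then z_3 = z_4 = ... = z_{e+2} and z_{e+3} = z_{e+4} = ... = z_n, and: (χ+1)z_1 = z_1 + z_2 + e·z_3 + (n-e-2)·z_n; (χ+1)z_2 = z_1 + z_2 + e·z_3; χ·z_3 = z_1 + z_2; and, provided n > e+2, χ·z_n = z_1. Moreover, χ is the largest real root of the polynomial λ(λ+1)(λ² - λ - 2e) - (n-e-2)(λ² - e). -/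
open Polynomial Matrix

attribute [local instance] Classical.propDecidable

section Helpers

open Finset

private lemma sumIteVal {n : ℕ} (z : Fin n → ℝ) (k : ℕ) (hk : k < n) :
    (∑ j : Fin n, if (j:ℕ) = k then z j else 0) = z ⟨k,hk⟩ := by
  trans (∑ j : Fin n, if j = (⟨k,hk⟩:Fin n) then z j else 0)
  · exact Finset.sum_congr rfl fun j _ => if_congr (by simp [Fin.ext_iff]) rfl rfl
  · simp

private lemma cardFilterVal (n : ℕ) (P : ℕ → Prop) [DecidablePred P] :
    (Finset.univ.filter (fun j : Fin n => P (j:ℕ))).card = ((Finset.range n).filter P).card := by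
  apply Finset.card_bij (i := fun (j : Fin n) _ => (j : ℕ))
  · intro a ha; simp at ha ⊢; exact ha
  · intro a _ b _ h; exact Fin.ext h
  · intro b hb; simp at hb; exact ⟨⟨b, hb.1⟩, by simp [hb.2], rfl⟩

private lemma sumIteConst {n : ℕ} (c : ℝ) (P : ℕ → Prop) [DecidablePred P] (z : Fin n → ℝ)
    (hc : ∀ j : Fin n, P (j:ℕ) → z j = c) :
    (∑ j : Fin n, if P (j:ℕ) then z j else 0)
      = (((Finset.range n).filter P).card : ℝ) * c := by
  trans (∑ j : Fin n, if P (j:ℕ) then c else 0)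
  · refine Finset.sum_congr rfl fun j _ => ?_
    by_cases h : P (j:ℕ) <;> simp [h, hc j]
  · rw [← Finset.sum_filter, Finset.sum_const, ← cardFilterVal n P]
    simp [nsmul_eq_mul]

end Helpers

theorem stmt_2 (e n : ℕ) (he : 4 ≤ e) (hn : e + 2 ≤ n)
    (χ : ℝ) (hχ : χ = specRad (graphV n e))
    (z : Fin n → ℝ) (hz : ((graphV n e).adjMatrix ℝ).mulVec z = χ • z)
    (hpos : ∀ i, 0 < z i) :
    (∀ p q : Fin n, 2 ≤ (p : ℕ) → (p : ℕ) ≤ e + 1 → 2 ≤ (q : ℕ) → (q : ℕ) ≤ e + 1 →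
      z p = z q) ∧
    (∀ p q : Fin n, e + 2 ≤ (p : ℕ) → e + 2 ≤ (q : ℕ) → z p = z q) ∧
    (∀ v1 v2 v3 vn : Fin n, (v1 : ℕ) = 0 → (v2 : ℕ) = 1 → (v3 : ℕ) = 2 → (vn : ℕ) = n - 1 →
      ((χ + 1) * z v1 = z v1 + z v2 + (e : ℝ) * z v3 + ((n : ℝ) - (e : ℝ) - 2) * z vn) ∧
      ((χ + 1) * z v2 = z v1 + z v2 + (e : ℝ) * z v3) ∧
      (χ * z v3 = z v1 + z v2) ∧
      (e + 2 < n → χ * z vn = z v1)) ∧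
    IsGreatestZero (fun x : ℝ =>
      x * (x + 1) * (x ^ 2 - x - 2 * (e : ℝ))
        - ((n : ℝ) - (e : ℝ) - 2) * (x ^ 2 - (e : ℝ))) χ := by
  have hcast : (4:ℝ) ≤ (e:ℝ) := by exact_mod_cast he
  have hncast : (e:ℝ) + 2 ≤ (n:ℝ) := by exact_mod_cast hn
  have hm0 : (0:ℝ) ≤ (n:ℝ) - (e:ℝ) - 2 := by linarith only [hncast]
  have h0n : 0 < n := by omega
  have h1n : 1 < n := by omega
  have h2n : 2 < n := by omega
  have hNn : n - 1 < n := by omega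
  obtain ⟨v0, hv0v⟩ : ∃ v : Fin n, (v:ℕ) = 0 := ⟨⟨0, h0n⟩, rfl⟩
  obtain ⟨w1, hw1v⟩ : ∃ v : Fin n, (v:ℕ) = 1 := ⟨⟨1, h1n⟩, rfl⟩
  obtain ⟨w3, hw3v⟩ : ∃ v : Fin n, (v:ℕ) = 2 := ⟨⟨2, h2n⟩, rfl⟩
  obtain ⟨wN, hwNv⟩ : ∃ v : Fin n, (v:ℕ) = n - 1 := ⟨⟨n - 1, hNn⟩, rfl⟩
  have adj_iff : ∀ i j : Fin n, (graphV n e).Adj i j ↔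
      i ≠ j ∧ ((i:ℕ)=0 ∨ (j:ℕ)=0 ∨ ((i:ℕ)=1 ∧ 2 ≤ (j:ℕ) ∧ (j:ℕ) ≤ e+1)
        ∨ ((j:ℕ)=1 ∧ 2 ≤ (i:ℕ) ∧ (i:ℕ) ≤ e+1)) := by
    intro i j; simp only [graphV, SimpleGraph.fromRel_adj]; tauto
  have hrow : ∀ i : Fin n, χ * z i = ∑ j : Fin n, if (graphV n e).Adj i j then z j else 0 := by
    intro i
    have h := congrFun hz i
    rw [show ((graphV n e).adjMatrix ℝ).mulVec z i = ((graphV n e).adjMatrix ℝ *ᵥ z) i from rfl,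
      SimpleGraph.adjMatrix_mulVec_apply, SimpleGraph.neighborFinset_eq_filter,
      Finset.sum_filter] at h
    simpa using h.symm
  -- middle rows
  have hmid : ∀ p : Fin n, 2 ≤ (p:ℕ) → (p:ℕ) ≤ e+1 → χ * z p = z v0 + z w1 := by
    intro p h2 h3
    rw [hrow p]
    have hsplit : ∀ j : Fin n, (if (graphV n e).Adj p j then z j else 0)
        = (if (j:ℕ) = 0 then z j else 0) + (if (j:ℕ) = 1 then z j else 0) := by
      intro j
      have hiff : (graphV n e).Adj p j ↔ ((j:ℕ) = 0 ∨ (j:ℕ) = 1) := by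
        rw [adj_iff]; simp only [ne_eq, Fin.ext_iff]; omega
      rw [if_congr hiff rfl rfl]
      by_cases h0 : (j:ℕ) = 0
      · rw [if_pos (Or.inl h0), if_pos h0, if_neg (by omega)]; ring
      · by_cases h1 : (j:ℕ) = 1
        · rw [if_pos (Or.inr h1), if_neg h0, if_pos h1]; ring
        · rw [if_neg (by tauto), if_neg h0, if_neg h1]; ring
    rw [Finset.sum_congr rfl (fun j _ => hsplit j), Finset.sum_add_distrib,
      sumIteVal z 0 h0n, sumIteVal z 1 h1n,
      show (⟨0,h0n⟩ : Fin n) = v0 from Fin.ext hv0v.symm,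
      show (⟨1,h1n⟩ : Fin n) = w1 from Fin.ext hw1v.symm]
  -- tail rows
  have htail : ∀ p : Fin n, e + 2 ≤ (p:ℕ) → χ * z p = z v0 := by
    intro p h2
    rw [hrow p]
    have hsplit : ∀ j : Fin n, (if (graphV n e).Adj p j then z j else 0)
        = (if (j:ℕ) = 0 then z j else 0) := by
      intro j
      have hiff : (graphV n e).Adj p j ↔ (j:ℕ) = 0 := by
        rw [adj_iff]; simp only [ne_eq, Fin.ext_iff]; omega
      rw [if_congr hiff rfl rfl]
    rw [Finset.sum_congr rfl (fun j _ => hsplit j), sumIteVal z 0 h0n,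
      show (⟨0,h0n⟩ : Fin n) = v0 from Fin.ext hv0v.symm]
  have hzv0 := hpos v0
  have hzw1 := hpos w1
  have hzw3 := hpos w3
  have hzwN := hpos wN
  have E2 : χ * z w3 = z v0 + z w1 := hmid w3 (by omega) (by omega)
  have hχpos : 0 < χ := by
    rcases lt_or_ge 0 χ with h | h
    · exact h
    · exfalso
      have h2 : χ * z w3 ≤ 0 := mul_nonpos_iff.mpr (Or.inr ⟨h, hzw3.le⟩)
      linarith only [h2, E2, hzv0, hzw1]
  have part1 : ∀ p q : Fin n, 2 ≤ (p:ℕ) → (p:ℕ) ≤ e+1 → 2 ≤ (q:ℕ) → (q:ℕ) ≤ e+1 →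
      z p = z q := by
    intro p q hp1 hp2 hq1 hq2
    exact mul_left_cancel₀ (ne_of_gt hχpos) ((hmid p hp1 hp2).trans (hmid q hq1 hq2).symm)
  have part2 : ∀ p q : Fin n, e+2 ≤ (p:ℕ) → e+2 ≤ (q:ℕ) → z p = z q := by
    intro p q hp hq
    exact mul_left_cancel₀ (ne_of_gt hχpos) ((htail p hp).trans (htail q hq).symm)
  -- sums over classes
  have hSmid : (∑ j : Fin n, if 2 ≤ (j:ℕ) ∧ (j:ℕ) ≤ e+1 then z j else 0) = (e:ℝ) * z w3 := by
    rw [sumIteConst (z w3) (fun j => 2 ≤ j ∧ j ≤ e+1) z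
      (fun j hj => part1 j w3 hj.1 hj.2 (by omega) (by omega))]
    congr 1
    have hfe : (Finset.range n).filter (fun j => 2 ≤ j ∧ j ≤ e+1) = Finset.Ico 2 (e+2) := by
      ext a; simp only [Finset.mem_filter, Finset.mem_range, Finset.mem_Ico]; omega
    rw [hfe, Nat.card_Ico]
    norm_num
  have hStail : (∑ j : Fin n, if e+2 ≤ (j:ℕ) then z j else 0) = ((n:ℝ)-(e:ℝ)-2) * z wN := by
    rw [sumIteConst (z wN) (fun j => e+2 ≤ j) z
      (fun j hj => part2 j wN hj (by have := j.isLt; omega))]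
    congr 1
    have hfe : (Finset.range n).filter (fun j => e+2 ≤ j) = Finset.Ico (e+2) n := by
      ext a; simp only [Finset.mem_filter, Finset.mem_range, Finset.mem_Ico]; omega
    rw [hfe, Nat.card_Ico, Nat.cast_sub hn]
    push_cast; ring
  -- row 1 (vertex w1)
  have E1 : χ * z w1 = z v0 + (e:ℝ) * z w3 := by
    rw [hrow w1]
    have hsplit : ∀ j : Fin n, (if (graphV n e).Adj w1 j then z j else 0)
        = (if (j:ℕ) = 0 then z j else 0) + (if 2 ≤ (j:ℕ) ∧ (j:ℕ) ≤ e+1 then z j else 0) := by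
      intro j
      have hiff : (graphV n e).Adj w1 j ↔ ((j:ℕ) = 0 ∨ (2 ≤ (j:ℕ) ∧ (j:ℕ) ≤ e+1)) := by
        rw [adj_iff]; simp only [ne_eq, Fin.ext_iff]; omega
      rw [if_congr hiff rfl rfl]
      by_cases h0 : (j:ℕ) = 0
      · rw [if_pos (Or.inl h0), if_pos h0, if_neg (by omega)]; ring
      · by_cases h1 : 2 ≤ (j:ℕ) ∧ (j:ℕ) ≤ e+1
        · rw [if_pos (Or.inr h1), if_neg h0, if_pos h1]; ring
        · rw [if_neg (by tauto), if_neg h0, if_neg h1]; ring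
    rw [Finset.sum_congr rfl (fun j _ => hsplit j), Finset.sum_add_distrib,
      sumIteVal z 0 h0n, hSmid, show (⟨0,h0n⟩ : Fin n) = v0 from Fin.ext hv0v.symm]
  -- row 0 (vertex v0)
  have E0 : χ * z v0 = z w1 + (e:ℝ) * z w3 + ((n:ℝ)-(e:ℝ)-2) * z wN := by
    rw [hrow v0]
    have hsplit : ∀ j : Fin n, (if (graphV n e).Adj v0 j then z j else 0)
        = (if (j:ℕ) = 1 then z j else 0) + (if 2 ≤ (j:ℕ) ∧ (j:ℕ) ≤ e+1 then z j else 0)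
          + (if e+2 ≤ (j:ℕ) then z j else 0) := by
      intro j
      have hiff : (graphV n e).Adj v0 j ↔ ¬((j:ℕ) = 0) := by
        rw [adj_iff]; simp only [ne_eq, Fin.ext_iff]; omega
      rw [if_congr hiff rfl rfl]
      by_cases h0 : (j:ℕ) = 0
      · rw [if_neg (not_not_intro h0), if_neg (by omega), if_neg (by omega), if_neg (by omega)]
        ring
      · by_cases h1 : (j:ℕ) = 1
        · rw [if_pos h0, if_pos h1, if_neg (by omega), if_neg (by omega)]; ring
        · by_cases h2 : 2 ≤ (j:ℕ) ∧ (j:ℕ) ≤ e+1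
          · rw [if_pos h0, if_neg h1, if_pos h2, if_neg (by omega)]; ring
          · rw [if_pos h0, if_neg h1, if_neg h2, if_pos (by omega)]; ring
    rw [Finset.sum_congr rfl (fun j _ => hsplit j), Finset.sum_add_distrib,
      Finset.sum_add_distrib, sumIteVal z 1 h1n, hSmid, hStail,
      show (⟨1,h1n⟩ : Fin n) = w1 from Fin.ext hw1v.symm]
  have E3 : ((n:ℝ)-(e:ℝ)-2) * (χ * z wN) = ((n:ℝ)-(e:ℝ)-2) * z v0 := by
    rcases eq_or_lt_of_le hn with heq | hlt
    · have hmz : (n:ℝ)-(e:ℝ)-2 = 0 := by rw [← heq]; push_cast; ring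
      rw [hmz]; ring
    · rw [htail wN (by omega)]
  -- key algebraic identities
  have h1 : z w3 * (χ^2 - e) = z v0 * (χ+1) := by linear_combination χ * E2 + E1
  have h2 : z w3 * (χ^2 - χ - 2*e) = ((n:ℝ)-(e:ℝ)-2) * z wN := by
    linear_combination h1 + E0 - E2
  have h4 : z v0 * (χ^2 - e - ((n:ℝ)-(e:ℝ)-2)) = z w1 * (χ + e) := by
    linear_combination χ * E0 + (e:ℝ) * E2 + E3
  have hfχ : χ*(χ+1)*(χ^2-χ-2*(e:ℝ)) - ((n:ℝ)-(e:ℝ)-2)*(χ^2-(e:ℝ)) = 0 := by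
    have key : z w3 * (χ*(χ+1)*(χ^2-χ-2*(e:ℝ)) - ((n:ℝ)-(e:ℝ)-2)*(χ^2-(e:ℝ))) = 0 := by
      linear_combination χ*(χ+1)*h2 + (χ+1)*E3 - ((n:ℝ)-(e:ℝ)-2)*h1
    rcases mul_eq_zero.mp key with h | h
    · exact absurd h (ne_of_gt hzw3)
    · exact h
  -- bounds
  have hb1 : χ + 2*(e:ℝ) ≤ χ^2 := by
    by_contra hlt
    push_neg at hlt
    have hneg : z w3 * (χ^2 - χ - 2*(e:ℝ)) < 0 :=
      mul_neg_of_pos_of_neg hzw3 (by linarith only [hlt])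
    have hnn : (0:ℝ) ≤ ((n:ℝ)-(e:ℝ)-2) * z wN := mul_nonneg hm0 hzwN.le
    linarith only [h2, hneg, hnn]
  have hb2 : (e:ℝ) + ((n:ℝ)-(e:ℝ)-2) < χ^2 := by
    by_contra hle
    push_neg at hle
    have hbpos : 0 < z w1 * (χ + e) := mul_pos hzw1 (by linarith only [hχpos, hcast])
    have hnp : z v0 * (χ^2 - e - ((n:ℝ)-(e:ℝ)-2)) ≤ 0 :=
      mul_nonpos_iff.mpr (Or.inl ⟨hzv0.le, by linarith only [hle]⟩)
    linarith only [h4, hbpos, hnp]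
  have hχ2 : 2 < χ := by nlinarith only [hb2, hm0, hcast, hχpos]
  refine ⟨part1, part2, ?_, hfχ, ?_⟩
  · intro a b c d ha hb hc hd
    have hav : a = v0 := Fin.ext (by rw [ha, hv0v])
    have hbv : b = w1 := Fin.ext (by rw [hb, hw1v])
    have hcv : c = w3 := Fin.ext (by rw [hc, hw3v])
    have hdv : d = wN := Fin.ext (by rw [hd, hwNv])
    rw [hav, hbv, hcv, hdv]
    refine ⟨by linear_combination E0, by linear_combination E1, by linear_combination E2, ?_⟩
    intro hlt
    exact htail wN (by omega)
  · intro x hx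
    replace hx : x*(x+1)*(x^2-x-2*(e:ℝ)) - ((n:ℝ)-(e:ℝ)-2)*(x^2-(e:ℝ)) = 0 := hx
    by_contra hgt
    push_neg at hgt
    have hx2 : χ^2 < x^2 := by
      nlinarith only [mul_pos (sub_pos.mpr hgt)
        (show (0:ℝ) < x + χ by linarith only [hχpos, hgt])]
    have hA : χ + (e:ℝ) - 1 < x^2 + χ^2 - 2*(e:ℝ) - 1 - ((n:ℝ)-(e:ℝ)-2) := by
      linarith only [hx2, hb1, hb2]
    have hB : (0:ℝ) < χ + (e:ℝ) - 1 := by linarith only [hχ2, hcast]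
    have hC : (x+χ)*(χ+(e:ℝ)-1) < (x+χ)*(x^2+χ^2-2*(e:ℝ)-1-((n:ℝ)-(e:ℝ)-2)) :=
      mul_lt_mul_of_pos_left hA (by linarith only [hχ2, hgt])
    have hD : 4*(χ+(e:ℝ)-1) < (x+χ)*(χ+(e:ℝ)-1) :=
      mul_lt_mul_of_pos_right (by linarith only [hχ2, hgt]) hB
    have hbr : 0 < (x+χ)*(x^2+χ^2-2*(e:ℝ)-1-((n:ℝ)-(e:ℝ)-2)) - 2*(e:ℝ) := by
      linarith only [hC, hD, hB, hχ2, hcast]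
    have hfx : x*(x+1)*(x^2-x-2*(e:ℝ)) - ((n:ℝ)-(e:ℝ)-2)*(x^2-(e:ℝ))
        = (x-χ)*((x+χ)*(x^2+χ^2-2*(e:ℝ)-1-((n:ℝ)-(e:ℝ)-2)) - 2*(e:ℝ))
          + (χ*(χ+1)*(χ^2-χ-2*(e:ℝ)) - ((n:ℝ)-(e:ℝ)-2)*(χ^2-(e:ℝ))) := by ring
    have hpos' : 0 < x*(x+1)*(x^2-x-2*(e:ℝ)) - ((n:ℝ)-(e:ℝ)-2)*(x^2-(e:ℝ)) := by
      rw [hfx, hfχ]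
      have hprod := mul_pos (show (0:ℝ) < x - χ by linarith only [hgt]) hbr
      linarith only [hprod]
    linarith only [hpos', hx]
end
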